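/- Let h be the 6-dimensional real Lie algebra with basis X₁,X₂,X₃,Y₁,Y₂,Y₃ and brackets [X₁,X₂] = Y₃, [X₂,X₃] = Y₁, [X₃,X₁] = Y₂, all other brackets of basis elements zero. Given a₁,a₂,a₃ ∈ ℝ, let ω : h × h → ℝ be the (unique) skew-symmetric bilinear form with ω(X_j,Y_k) = δ_{jk} a_j and ω(X_j,X_k) = ω(Y_j,Y_k) = 0 for all j,k ∈ {1,2,3}. Then ω is a symplectic structure on the Lie algebra h — that is, ω is nondegenerate and satisfies the 2-cocycle identity ω([u,v],w) + ω([v,w],u) + ω([w,u],v) = 0 for all u,v,w ∈ h — if and only if a₁ + a₂ + a₃ = 0 and a₁a₂a₃ ≠ 0. -/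

import Mathlib

/-- If a function vanishes on a spanning set, is additive and compatible with scalars, then
it vanishes everywhere. -/
lemma vanish_of_span_aux {M : Type*} [AddCommGroup M] [Module ℝ M] {s : Set M}
    (hs : Submodule.span ℝ s = ⊤) (f : M → ℝ)
    (h0 : f 0 = 0) (hadd : ∀ x y, f (x + y) = f x + f y)
    (hsmul : ∀ (c : ℝ) x, f (c • x) = c * f x)
    (hmem : ∀ x ∈ s, f x = 0) : ∀ x, f x = 0 := by
  intro x
  have hx : x ∈ Submodule.span ℝ s := hs ▸ Submodule.mem_top
  induction hx using Submodule.span_induction with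
  | mem y hy => exact hmem y hy
  | zero => exact h0
  | add y z _ _ hy hz => rw [hadd, hy, hz]; ring
  | smul c y _ hy => rw [hsmul, hy]; ring

set_option maxHeartbeats 2000000 in
theorem free2step_symplectic_iff
    (h : Type*) [LieRing h] [LieAlgebra ℝ h]
    (X Y : Fin 3 → h)
    (hindep : LinearIndependent ℝ (Sum.elim X Y))
    (hspan : Submodule.span ℝ (Set.range (Sum.elim X Y)) = ⊤)
    (h12 : ⁅X 0, X 1⁆ = Y 2) (h23 : ⁅X 1, X 2⁆ = Y 0) (h31 : ⁅X 2, X 0⁆ = Y 1)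
    (hXY : ∀ i j, ⁅X i, Y j⁆ = 0) (hYY : ∀ i j, ⁅Y i, Y j⁆ = 0)
    (a : Fin 3 → ℝ)
    (ω : h →ₗ[ℝ] h →ₗ[ℝ] ℝ)
    (hskew : ∀ u v : h, ω u v = -ω v u)
    (hωXY : ∀ j k, ω (X j) (Y k) = if j = k then a j else 0)
    (hωXX : ∀ j k, ω (X j) (X k) = 0)
    (hωYY : ∀ j k, ω (Y j) (Y k) = 0) :
    ((∀ u : h, (∀ v : h, ω u v = 0) → u = 0) ∧
      (∀ u v w : h, ω ⁅u, v⁆ w + ω ⁅v, w⁆ u + ω ⁅w, u⁆ v = 0)) ↔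
    (a 0 + a 1 + a 2 = 0 ∧ a 0 * a 1 * a 2 ≠ 0) := by
  have hYX : ∀ i j, ⁅Y i, X j⁆ = 0 := by
    intro i j; rw [← lie_skew, hXY]; simp
  have h21 : ⁅X 1, X 0⁆ = -Y 2 := by rw [← lie_skew, h12]
  have h32 : ⁅X 2, X 1⁆ = -Y 0 := by rw [← lie_skew, h23]
  have h13 : ⁅X 0, X 2⁆ = -Y 1 := by rw [← lie_skew, h31]
  have hωYX : ∀ j k, ω (Y j) (X k) = -(if k = j then a k else 0) := by
    intro j k; rw [hskew, hωXY]
  constructor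
  · rintro ⟨hnd, hco⟩
    have hsum : a 0 + a 1 + a 2 = 0 := by
      have := hco (X 0) (X 1) (X 2)
      rw [h12, h23, h31, hωYX, hωYX, hωYX] at this
      simp at this
      linarith
    refine ⟨hsum, ?_⟩
    have hne : ∀ j, a j ≠ 0 := by
      intro j haj
      have hY0 : Y j = 0 := by
        apply hnd
        apply vanish_of_span_aux hspan (fun v => ω (Y j) v) (by simp)
          (by intro x y; simp) (by intro c x; simp)
        rintro v ⟨i, rfl⟩
        rcases i with k | k
        · simp only [Sum.elim_inl, hωYX]
          split_ifs with hkj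
          · subst hkj; simp [haj]
          · simp
        · simp [hωYY]
      exact hindep.ne_zero (Sum.inr j) hY0
    exact mul_ne_zero (mul_ne_zero (hne 0) (hne 1)) (hne 2)
  · rintro ⟨hsum, hprod⟩
    have ha0 : a 0 ≠ 0 := fun H => hprod (by rw [H]; ring)
    have ha1 : a 1 ≠ 0 := fun H => hprod (by rw [H]; ring)
    have ha2 : a 2 ≠ 0 := fun H => hprod (by rw [H]; ring)
    have hne : ∀ j : Fin 3, a j ≠ 0 := by
      intro j; fin_cases j <;> assumption
    constructor
    · -- nondegeneracy
      intro u hu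
      set B : Module.Basis (Fin 3 ⊕ Fin 3) ℝ h := Module.Basis.mk hindep (by rw [hspan])
      have hB : ∀ i, B i = Sum.elim X Y i := by
        intro i; simp [B, Module.Basis.coe_mk]
      set c : Fin 3 ⊕ Fin 3 → ℝ := fun i => B.repr u i with hc
      have hrep : ∀ v : h, ω u v = ∑ i, c i * ω (Sum.elim X Y i) v := by
        intro v
        conv_lhs => rw [← B.sum_repr u]
        simp only [map_sum, LinearMap.sum_apply, map_smul, LinearMap.smul_apply,
          smul_eq_mul, hB]
        rfl
      have hinl : ∀ j, c (Sum.inl j) = 0 := by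
        intro j
        have := hu (Y j)
        rw [hrep] at this
        simp only [Fintype.sum_sum_type, Sum.elim_inl, Sum.elim_inr, hωXY, hωYY,
          mul_zero, Finset.sum_const_zero, add_zero, mul_ite] at this
        rw [Finset.sum_ite_eq' Finset.univ j (fun k => c (Sum.inl k) * a k)] at this
        simp at this
        exact this.resolve_right (hne j)
      have hinr : ∀ j, c (Sum.inr j) = 0 := by
        intro j
        have := hu (X j)
        rw [hrep] at this
        simp only [Fintype.sum_sum_type, Sum.elim_inl, Sum.elim_inr, hωXX, hωYX,
          mul_zero, Finset.sum_const_zero, zero_add, mul_neg, mul_ite] at this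
        rw [Finset.sum_neg_distrib, Finset.sum_ite_eq Finset.univ j
          (fun k => c (Sum.inr k) * a j)] at this
        simp at this
        exact this.resolve_right (hne j)
      have : ∀ i, c i = 0 := by rintro (k | k); exacts [hinl k, hinr k]
      calc u = ∑ i, c i • B i := (B.sum_repr u).symm
        _ = 0 := by
          apply Finset.sum_eq_zero; intro i _; rw [this i, zero_smul]
    · -- cocycle
      set S := Set.range (Sum.elim X Y) with hS
      have hbase : ∀ u ∈ S, ∀ v ∈ S, ∀ w ∈ S,
          ω ⁅u, v⁆ w + ω ⁅v, w⁆ u + ω ⁅w, u⁆ v = 0 := by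
        rintro _ ⟨i, rfl⟩ _ ⟨j, rfl⟩ _ ⟨k, rfl⟩
        rcases i with i | i <;> rcases j with j | j <;> rcases k with k | k <;>
          simp only [Sum.elim_inl, Sum.elim_inr] <;>
          fin_cases i <;> fin_cases j <;> fin_cases k <;>
          simp [h12, h23, h31, h21, h32, h13, hXY, hYX, hYY, hωXY, hωXX, hωYY, hωYX,
            lie_self] <;>
          linarith
      have h1 : ∀ u ∈ S, ∀ v ∈ S, ∀ w : h,
          ω ⁅u, v⁆ w + ω ⁅v, w⁆ u + ω ⁅w, u⁆ v = 0 := by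
        intro u hu v hv
        apply vanish_of_span_aux hspan
          (fun w => ω ⁅u, v⁆ w + ω ⁅v, w⁆ u + ω ⁅w, u⁆ v)
        · simp
        · intro x y
          simp only [map_add, lie_add, add_lie, LinearMap.add_apply]; ring
        · intro cc x
          simp only [map_smul, lie_smul, smul_lie, LinearMap.smul_apply, smul_eq_mul]; ring
        · exact hbase u hu v hv
      have h2 : ∀ u ∈ S, ∀ v w : h,
          ω ⁅u, v⁆ w + ω ⁅v, w⁆ u + ω ⁅w, u⁆ v = 0 := by
        intro u hu v w
        apply vanish_of_span_aux hspan
          (fun v => ω ⁅u, v⁆ w + ω ⁅v, w⁆ u + ω ⁅w, u⁆ v)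
        · simp
        · intro x y
          simp only [map_add, lie_add, add_lie, LinearMap.add_apply]; ring
        · intro cc x
          simp only [map_smul, lie_smul, smul_lie, LinearMap.smul_apply, smul_eq_mul]; ring
        · intro x hx; exact h1 u hu x hx w
      intro u v w
      apply vanish_of_span_aux hspan
        (fun u => ω ⁅u, v⁆ w + ω ⁅v, w⁆ u + ω ⁅w, u⁆ v)
      · simp
      · intro x y
        simp only [map_add, lie_add, add_lie, LinearMap.add_apply]; ring
      · intro cc x
        simp only [map_smul, lie_smul, smul_lie, LinearMap.smul_apply, smul_eq_mul]; ring
      · intro x hx; exact h2 x hx v w
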